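/- For k ≥ 3 and n ≥ 2k, the family F = {∅,[n]} ∪ A_1 ∪ A_2 ∪ A_{1,2} ∪ (A_1 ∪ A_2 ∪ A_{1,2})^c ⊆ 2^{[n]}, with A_1 = nonempty subsets of [k], A_2 = nonempty subsets of [k+1,2k-1], A_{1,2} = { [k] ∪ A : A ∈ A_2 }, contains no induced copy of 2C_k + C_1: there do not exist two incomparable k-chains in F together with a further set of F incomparable to all sets of both chains. -/

import Mathlib

/-- The family `A_1` of nonempty subsets of `[k]`. -/
def famA1 (k : ℕ) : Finset (Finset ℕ) := (Finset.Icc 1 k).powerset.erase ∅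

/-- The family `A_2` of nonempty subsets of `[k+1, 2k-1]`. -/
def famA2 (k : ℕ) : Finset (Finset ℕ) := (Finset.Icc (k + 1) (2 * k - 1)).powerset.erase ∅

/-- The family `A_{1,2} = { [k] ∪ A : A ∈ A_2 }`. -/
def famA12 (k : ℕ) : Finset (Finset ℕ) := (famA2 k).image (fun A => Finset.Icc 1 k ∪ A)

/-- The saturating family for `2C_k + C_1`. -/
def famCk (k n : ℕ) : Finset (Finset ℕ) :=
  {∅, Finset.Icc 1 n} ∪ (famA1 k ∪ famA2 k ∪ famA12 k)
    ∪ (famA1 k ∪ famA2 k ∪ famA12 k).image (fun A => Finset.Icc 1 n \ A)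

namespace CkAux
open Finset

set_option linter.unusedSectionVars false
set_option linter.unusedVariables false

lemma fin_gap' {m : ℕ} (g : Fin m → ℕ) (hg : ∀ i j : Fin m, i < j → g i < g j) (d : ℕ) :
    ∀ i j : Fin m, j.val = i.val + d → g i + d ≤ g j := by
  induction d with
  | zero =>
    intro i j h
    have : i = j := Fin.ext (by omega)
    subst this; omega
  | succ d ih =>
    intro i j h
    have hj' : i.val + d < m := by omega
    have h1 := ih i ⟨i.val + d, hj'⟩ rfl
    have h2 : g ⟨i.val + d, hj'⟩ < g j := hg _ _ (by simp [Fin.lt_def]; omega)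
    omega

/-- The core lemma: in the "two-level" world over an inner ranked poset `V`,
there is no induced `2C_k + C_1`. -/
lemma core (k : ℕ) (hk : 3 ≤ k) (V : Finset ℕ → Prop) (C vt : Finset ℕ) (ρ : Finset ℕ → ℕ)
    (hC : C.Nonempty)
    (hdisj : ∀ v, V v → v ∩ C = ∅)
    (htop : ∀ v, V v → v ⊆ vt)
    (hmono : ∀ v w, V v → V w → v ⊂ w → ρ v < ρ w)
    (hle : ∀ v, V v → ρ v ≤ k)
    (h0 : ∀ v, V v → ρ v = 0 → v = ∅)
    (hkk : ∀ v, V v → ρ v = k → v = vt)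
    (hP : ∀ u w z, V u → V w → V z → ρ u = 1 → ρ w = k - 1 → ¬ u ⊆ w → ¬ z ⊆ w → u ⊆ z)
    (A B : Fin k → Finset ℕ) (E : Finset ℕ)
    (hA : ∀ i, (V (A i) ∧ A i ≠ ∅ ∧ A i ∩ C = ∅) ∨ ∃ v, V v ∧ v ≠ vt ∧ A i = v ∪ C)
    (hB : ∀ i, (V (B i) ∧ B i ≠ ∅ ∧ B i ∩ C = ∅) ∨ ∃ v, V v ∧ v ≠ vt ∧ B i = v ∪ C)
    (hE : (V E ∧ E ≠ ∅ ∧ E ∩ C = ∅) ∨ ∃ v, V v ∧ v ≠ vt ∧ E = v ∪ C)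
    (hAc : ∀ i j : Fin k, i < j → A i ⊂ A j)
    (hBc : ∀ i j : Fin k, i < j → B i ⊂ B j)
    (hABi : ∀ i j : Fin k, ¬ A i ⊆ B j ∧ ¬ B j ⊆ A i)
    (hAE : ∀ i, ¬ A i ⊆ E ∧ ¬ E ⊆ A i)
    (hBE : ∀ i, ¬ B i ⊆ E ∧ ¬ E ⊆ B i) : False := by
  classical
  -- basic tools
  have hCS : ∀ S : Finset ℕ, S ∩ C = ∅ → ¬ C ⊆ S := by
    intro S h hsub
    obtain ⟨c, hc⟩ := hC
    have : c ∈ S ∩ C := mem_inter.mpr ⟨hsub hc, hc⟩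
    rw [h] at this; exact notMem_empty c this
  have hmem : ∀ v, V v → ∀ x, x ∈ v → x ∉ C := by
    intro v hv x hx hxC
    have : x ∈ v ∩ C := mem_inter.mpr ⟨hx, hxC⟩
    rw [hdisj v hv] at this; exact notMem_empty x this
  have hsd : ∀ v, V v → (v ∪ C) \ C = v := by
    intro v hv
    ext x
    simp only [mem_sdiff, mem_union]
    constructor
    · rintro ⟨h1 | h1, h2⟩
      · exact h1
      · exact absurd h1 h2
    · intro hx
      exact ⟨Or.inl hx, hmem v hv x hx⟩
  -- rank function on the world
  set rhat : Finset ℕ → ℕ := fun S => if C ⊆ S then ρ (S \ C) + 1 else ρ S with hrhat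
  have hr0 : ∀ S : Finset ℕ, S ∩ C = ∅ → rhat S = ρ S := by
    intro S h; simp only [hrhat, if_neg (hCS S h)]
  have hr1 : ∀ v, V v → rhat (v ∪ C) = ρ v + 1 := by
    intro v hv
    simp only [hrhat, if_pos subset_union_right, hsd v hv]
  -- subset transfer lemmas
  have hsub01 : ∀ v w, V v → v ⊆ w ∪ C → v ⊆ w := by
    intro v w hv h x hx
    rcases mem_union.mp (h hx) with h' | h'
    · exact h'
    · exact absurd h' (hmem v hv x hx)
  -- bounds
  have hWm := fun S => (V S ∧ S ≠ ∅ ∧ S ∩ C = ∅) ∨ ∃ v, V v ∧ v ≠ vt ∧ S = v ∪ C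
  have hrb : ∀ S : Finset ℕ,
      ((V S ∧ S ≠ ∅ ∧ S ∩ C = ∅) ∨ ∃ v, V v ∧ v ≠ vt ∧ S = v ∪ C) →
      1 ≤ rhat S ∧ rhat S ≤ k := by
    rintro S (⟨hV, hne, hd⟩ | ⟨v, hv, hvne, rfl⟩)
    · rw [hr0 S hd]
      refine ⟨?_, hle S hV⟩
      rcases Nat.eq_zero_or_pos (ρ S) with h | h
      · exact absurd (h0 S hV h) hne
      · exact h
    · rw [hr1 v hv]
      have h1 : ρ v ≤ k := hle v hv
      have h2 : ρ v ≠ k := fun h => hvne (hkk v hv h)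
      omega
  -- strict monotonicity of rhat
  have hrmono : ∀ S S' : Finset ℕ,
      ((V S ∧ S ≠ ∅ ∧ S ∩ C = ∅) ∨ ∃ v, V v ∧ v ≠ vt ∧ S = v ∪ C) →
      ((V S' ∧ S' ≠ ∅ ∧ S' ∩ C = ∅) ∨ ∃ v, V v ∧ v ≠ vt ∧ S' = v ∪ C) →
      S ⊂ S' → rhat S < rhat S' := by
    rintro S S' (⟨hV, hne, hd⟩ | ⟨v, hv, hvne, rfl⟩) (⟨hV', hne', hd'⟩ | ⟨v', hv', hvne', rfl⟩) hss
    · rw [hr0 S hd, hr0 S' hd']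
      exact hmono S S' hV hV' hss
    · rw [hr0 S hd, hr1 v' hv']
      have hsv : S ⊆ v' := hsub01 S v' hV hss.subset
      rcases eq_or_ssubset_of_subset hsv with h | h
      · subst h; omega
      · have := hmono S v' hV hv' h; omega
    · exfalso
      exact hCS S' hd' (subset_union_right.trans hss.subset)
    · rw [hr1 v hv, hr1 v' hv']
      have hvv : v ⊂ v' := by
        constructor
        · intro x hx
          rcases mem_union.mp (hss.subset (mem_union.mpr (Or.inl hx))) with h | h
          · exact h
          · exact absurd h (hmem v hv x hx)
        · intro hsub
          exact hss.2 (union_subset_union hsub (Subset.refl C))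
      have := hmono v v' hv hv' hvv; omega
  -- index endpoints
  have hk0 : (0 : ℕ) < k := by omega
  have hkk1 : k - 1 < k := by omega
  set i0 : Fin k := ⟨0, hk0⟩ with hi0
  set ik : Fin k := ⟨k - 1, hkk1⟩ with hik
  -- rank endpoints for both chains
  have hgapA : rhat (A i0) + (k - 1) ≤ rhat (A ik) :=
    fin_gap' (fun i => rhat (A i)) (fun i j hij => hrmono _ _ (hA i) (hA j) (hAc i j hij))
      (k - 1) i0 ik (by simp [hi0, hik])
  have hgapB : rhat (B i0) + (k - 1) ≤ rhat (B ik) :=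
    fin_gap' (fun i => rhat (B i)) (fun i j hij => hrmono _ _ (hB i) (hB j) (hBc i j hij))
      (k - 1) i0 ik (by simp [hi0, hik])
  have hbA0 := hrb _ (hA i0); have hbAk := hrb _ (hA ik)
  have hbB0 := hrb _ (hB i0); have hbBk := hrb _ (hB ik)
  have hrA0 : rhat (A i0) = 1 := by omega
  have hrAk : rhat (A ik) = k := by omega
  have hrB0 : rhat (B i0) = 1 := by omega
  have hrBk : rhat (B ik) = k := by omega
  -- Case split on shapes of chain endpoints
  rcases hA i0 with hA0 | ⟨v, hv, hvne, hveq⟩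
  · obtain ⟨hVA0, hA0ne, hA0d⟩ := hA0
    have hρA0 : ρ (A i0) = 1 := by rw [hr0 _ hA0d] at hrA0; exact hrA0
    rcases hA ik with hAk | ⟨τA, hτA, hτAne, hτAeq⟩
    · obtain ⟨hVAk, hAkne, hAkd⟩ := hAk
      have hAkvt : A ik = vt := hkk _ hVAk (by rw [hr0 _ hAkd] at hrAk; exact hrAk)
      have hBs1 : ∀ j, ∃ w, V w ∧ w ≠ vt ∧ B j = w ∪ C := by
        intro j
        rcases hB j with ⟨hVB, hBne, hBd⟩ | h
        · exact absurd (by rw [hAkvt]; exact htop _ hVB) (hABi ik j).2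
        · exact h
      obtain ⟨w, hw, hwne, hweq⟩ := hBs1 i0
      rw [hweq, hr1 w hw] at hrB0
      have : w = ∅ := h0 w hw (by omega)
      subst this
      rw [empty_union] at hweq
      rcases hE with ⟨hVE, hEne, hEd⟩ | ⟨z, hz, hzne, hzeq⟩
      · exact (hAE ik).2 (by rw [hAkvt]; exact htop E hVE)
      · exact (hBE i0).1 (by rw [hweq, hzeq]; exact subset_union_right)
    · rw [hτAeq, hr1 τA hτA] at hrAk
      have hρτA : ρ τA = k - 1 := by omega
      rcases hB i0 with hB0 | ⟨w, hw, hwne, hweq⟩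
      · obtain ⟨hVB0, hB0ne, hB0d⟩ := hB0
        have hρB0 : ρ (B i0) = 1 := by rw [hr0 _ hB0d] at hrB0; exact hrB0
        rcases hB ik with hBk | ⟨τB, hτB, hτBne, hτBeq⟩
        · obtain ⟨hVBk, hBkne, hBkd⟩ := hBk
          have hBkvt : B ik = vt := hkk _ hVBk (by rw [hr0 _ hBkd] at hrBk; exact hrBk)
          exact (hABi i0 ik).1 (by rw [hBkvt]; exact htop _ hVA0)
        · rw [hτBeq, hr1 τB hτB] at hrBk
          have hρτB : ρ τB = k - 1 := by omega
          have hαnτB : ¬ A i0 ⊆ τB := by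
            intro h
            exact (hABi i0 ik).1 (by rw [hτBeq]; exact h.trans subset_union_left)
          rcases hE with ⟨hVE, hEne, hEd⟩ | ⟨z, hz, hzne, hzeq⟩
          · have hznτB : ¬ E ⊆ τB := by
              intro h
              exact (hBE ik).2 (by rw [hτBeq]; exact h.trans subset_union_left)
            exact (hAE i0).1 (hP (A i0) τB E hVA0 hτB hVE hρA0 hρτB hαnτB hznτB)
          · have hznτB : ¬ z ⊆ τB := by
              intro h
              exact (hBE ik).2
                (by rw [hτBeq, hzeq]; exact union_subset_union h (Subset.refl C))
            have := hP (A i0) τB z hVA0 hτB hz hρA0 hρτB hαnτB hznτB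
            exact (hAE i0).1 (by rw [hzeq]; exact this.trans subset_union_left)
      · -- B i0 = C
        rw [hweq, hr1 w hw] at hrB0
        have : w = ∅ := h0 w hw (by omega)
        subst this
        rw [empty_union] at hweq
        have hAs0 : ∀ j, V (A j) ∧ A j ≠ ∅ ∧ A j ∩ C = ∅ := by
          intro j
          rcases hA j with h | ⟨u, hu, hune, hueq⟩
          · exact h
          · exact absurd (by rw [hweq, hueq]; exact subset_union_right) (hABi j i0).2
        exact hCS _ (hAs0 ik).2.2 (by rw [hτAeq]; exact subset_union_right)
  · -- A i0 = C
    rw [hveq, hr1 v hv] at hrA0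
    have : v = ∅ := h0 v hv (by omega)
    subst this
    rw [empty_union] at hveq
    have hBs0 : ∀ j, V (B j) ∧ B j ≠ ∅ ∧ B j ∩ C = ∅ := by
      intro j
      rcases hB j with h | ⟨w, hw, hwne, hweq⟩
      · exact h
      · exact absurd (by rw [hveq, hweq]; exact subset_union_right) (hABi i0 j).1
    have hBkvt : B ik = vt := by
      rw [hr0 _ (hBs0 ik).2.2] at hrBk
      exact hkk _ (hBs0 ik).1 hrBk
    rcases hE with ⟨hVE, hEne, hEd⟩ | ⟨z, hz, hzne, hzeq⟩
    · exact (hBE ik).2 (by rw [hBkvt]; exact htop E hVE)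
    · exact (hAE i0).1 (by rw [hveq, hzeq]; exact subset_union_right)


variable (k n : ℕ)

def Kk : Finset ℕ := Finset.Icc 1 k
def Mm : Finset ℕ := Finset.Icc (k + 1) n
def Qk : Finset ℕ := Finset.Icc (k + 1) (2 * k - 1)
def Tl : Finset ℕ := Finset.Icc (2 * k) n

def Yv (y : Finset ℕ) : Prop := y ⊆ Qk k ∨ (Tl k n ⊆ y ∧ y ⊆ Mm k n)

def rhoY (y : Finset ℕ) : ℕ := (y ∩ Qk k).card + (if 2 * k ∈ y then 1 else 0)

variable {k n}

section facts
variable (hk : 3 ≤ k) (hn : 2 * k ≤ n)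
include hk hn

lemma card_Kk : (Kk k).card = k := by simp [Kk]
lemma card_Qk : (Qk k).card = k - 1 := by rw [Qk, Nat.card_Icc]; omega
lemma Kk_ne : (Kk k).Nonempty := ⟨1, by simp [Kk]; omega⟩
lemma Mm_ne : (Mm k n).Nonempty := ⟨k + 1, by simp [Mm]; omega⟩
lemma Tl_mem : 2 * k ∈ Tl k n := by simp [Tl]; omega
lemma Qk_sub_Mm : Qk k ⊆ Mm k n := by
  intro x hx; simp [Qk, mem_Icc] at hx; simp [Mm, mem_Icc]; omega
lemma Tl_sub_Mm : Tl k n ⊆ Mm k n := by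
  intro x hx; simp [Tl, mem_Icc] at hx; simp [Mm, mem_Icc]; omega
lemma twok_not_Qk : 2 * k ∉ Qk k := by simp [Qk, mem_Icc]; omega
lemma disj_KM : ∀ x, x ∈ Kk k → x ∉ Mm k n := by
  intro x h1 h2; simp [Kk, mem_Icc] at h1; simp [Mm, mem_Icc] at h2; omega
lemma Mm_split : ∀ x, x ∈ Mm k n → x ∈ Qk k ∨ x ∈ Tl k n := by
  intro x h; simp [Mm, mem_Icc] at h; simp [Qk, Tl, mem_Icc]; omega
lemma Yv_sub_Mm {y : Finset ℕ} (h : Yv k n y) : y ⊆ Mm k n := by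
  rcases h with h | h
  · exact h.trans (Qk_sub_Mm hk hn)
  · exact h.2
lemma Yv_empty : Yv k n ∅ := Or.inl (empty_subset _)
lemma Yv_Mm : Yv k n (Mm k n) := Or.inr ⟨Tl_sub_Mm hk hn, Subset.refl _⟩

lemma Y0 {y : Finset ℕ} (hy : Yv k n y) (h : rhoY k y = 0) : y = ∅ := by
  rcases hy with hy | hy
  · have h2 : 2 * k ∉ y := fun hm => twok_not_Qk hk hn (hy hm)
    rw [rhoY, if_neg h2] at h
    have : y ∩ Qk k = y := inter_eq_left.mpr hy
    rw [this] at h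
    exact card_eq_zero.mp (by omega)
  · exfalso
    have : 2 * k ∈ y := hy.1 (Tl_mem hk hn)
    rw [rhoY, if_pos this] at h
    omega

lemma Yle {y : Finset ℕ} (hy : Yv k n y) : rhoY k y ≤ k := by
  have h1 : (y ∩ Qk k).card ≤ k - 1 := by
    calc (y ∩ Qk k).card ≤ (Qk k).card := card_le_card inter_subset_right
    _ = k - 1 := card_Qk hk hn
  rw [rhoY]
  split <;> omega

lemma Yk {y : Finset ℕ} (hy : Yv k n y) (h : rhoY k y = k) : y = Mm k n := by
  rcases hy with hy | hy
  · exfalso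
    have h2 : 2 * k ∉ y := fun hm => twok_not_Qk hk hn (hy hm)
    rw [rhoY, if_neg h2] at h
    have : (y ∩ Qk k).card ≤ k - 1 := by
      calc (y ∩ Qk k).card ≤ (Qk k).card := card_le_card inter_subset_right
      _ = k - 1 := card_Qk hk hn
    omega
  · have h2 : 2 * k ∈ y := hy.1 (Tl_mem hk hn)
    rw [rhoY, if_pos h2] at h
    have hcard : (Qk k).card ≤ (y ∩ Qk k).card := by rw [card_Qk hk hn]; omega
    have hQ : y ∩ Qk k = Qk k := eq_of_subset_of_card_le inter_subset_right hcard
    apply Subset.antisymm hy.2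
    intro x hx
    rcases Mm_split hk hn x hx with h | h
    · have : x ∈ y ∩ Qk k := by rw [hQ]; exact h
      exact (mem_inter.mp this).1
    · exact hy.1 h

lemma Ymono {v w : Finset ℕ} (hv : Yv k n v) (hw : Yv k n w) (hss : v ⊂ w) :
    rhoY k v < rhoY k w := by
  rcases hv with hv | hv <;> rcases hw with hw | hw
  · have h2v : 2 * k ∉ v := fun hm => twok_not_Qk hk hn (hv hm)
    have h2w : 2 * k ∉ w := fun hm => twok_not_Qk hk hn (hw hm)
    rw [rhoY, rhoY, if_neg h2v, if_neg h2w, inter_eq_left.mpr hv, inter_eq_left.mpr hw]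
    simpa using card_lt_card hss
  · have h2v : 2 * k ∉ v := fun hm => twok_not_Qk hk hn (hv hm)
    have h2w : 2 * k ∈ w := hw.1 (Tl_mem hk hn)
    rw [rhoY, rhoY, if_neg h2v, if_pos h2w, inter_eq_left.mpr hv]
    have : v ⊆ w ∩ Qk k := fun x hx => mem_inter.mpr ⟨hss.subset hx, hv hx⟩
    have := card_le_card this
    omega
  · exfalso
    exact twok_not_Qk hk hn (hw (hss.subset (hv.1 (Tl_mem hk hn))))
  · have h2v : 2 * k ∈ v := hv.1 (Tl_mem hk hn)
    have h2w : 2 * k ∈ w := hw.1 (Tl_mem hk hn)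
    rw [rhoY, rhoY, if_pos h2v, if_pos h2w]
    have hsub : v ∩ Qk k ⊆ w ∩ Qk k := inter_subset_inter hss.subset (Subset.refl _)
    have hne : v ∩ Qk k ≠ w ∩ Qk k := by
      intro heq
      apply hss.2
      intro x hx
      rcases Mm_split hk hn x (hw.2 hx) with h | h
      · have : x ∈ v ∩ Qk k := by rw [heq]; exact mem_inter.mpr ⟨hx, h⟩
        exact (mem_inter.mp this).1
      · exact hv.1 h
    have := card_lt_card (ssubset_of_subset_of_ne hsub hne)
    omega

lemma YP {u w z : Finset ℕ} (hu : Yv k n u) (hw : Yv k n w) (hz : Yv k n z)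
    (hu1 : rhoY k u = 1) (hwk : rhoY k w = k - 1) (huw : ¬ u ⊆ w) (hzw : ¬ z ⊆ w) :
    u ⊆ z := by
  -- shape of u
  rcases hu with hu' | hu'
  · -- u = {a}, a ∈ Qk
    have h2u : 2 * k ∉ u := fun hm => twok_not_Qk hk hn (hu' hm)
    rw [rhoY, if_neg h2u, inter_eq_left.mpr hu'] at hu1
    obtain ⟨a, rfl⟩ := card_eq_one.mp (show u.card = 1 by omega)
    have haQ : a ∈ Qk k := hu' (mem_singleton_self a)
    have haw : a ∉ w := fun h => huw (singleton_subset_iff.mpr h)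
    -- shape of w
    rcases hw with hw' | hw'
    · -- w ⊆ Qk with card k-1 → w = Qk, contradicting a ∉ w
      have h2w : 2 * k ∉ w := fun hm => twok_not_Qk hk hn (hw' hm)
      rw [rhoY, if_neg h2w, inter_eq_left.mpr hw'] at hwk
      have : w = Qk k := eq_of_subset_of_card_le hw' (by rw [card_Qk hk hn]; omega)
      exact absurd (this ▸ haQ) haw
    · -- w ⊇ Tl, w ∩ Qk has card k-2; Qk \ w = {a}
      have h2w : 2 * k ∈ w := hw'.1 (Tl_mem hk hn)
      rw [rhoY, if_pos h2w] at hwk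
      have hwc : (w ∩ Qk k).card = k - 2 := by omega
      have hcardQw : (Qk k \ w).card = 1 := by
        have h1 : Qk k \ w = Qk k \ (w ∩ Qk k) := by
          ext x; simp only [mem_sdiff, mem_inter]; tauto
        rw [h1, card_sdiff_of_subset inter_subset_right, card_Qk hk hn, hwc]
        omega
      obtain ⟨b, hb⟩ := card_eq_one.mp hcardQw
      have hab : a = b := by
        have : a ∈ Qk k \ w := mem_sdiff.mpr ⟨haQ, haw⟩
        rw [hb] at this; exact mem_singleton.mp this
      subst hab
      -- find element of z outside w
      obtain ⟨c, hcz, hcw⟩ := not_subset.mp hzw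
      have hcM : c ∈ Mm k n := Yv_sub_Mm hk hn hz hcz
      have hcQ : c ∈ Qk k := by
        rcases Mm_split hk hn c hcM with h | h
        · exact h
        · exact absurd (hw'.1 h) hcw
      have : c ∈ Qk k \ w := mem_sdiff.mpr ⟨hcQ, hcw⟩
      rw [hb] at this
      have : c = a := mem_singleton.mp this
      subst this
      exact singleton_subset_iff.mpr hcz
  · -- u ⊇ Tl, rho = 1 → u ∩ Qk = ∅ → u = Tl
    have h2u : 2 * k ∈ u := hu'.1 (Tl_mem hk hn)
    rw [rhoY, if_pos h2u] at hu1
    have huQ : u ∩ Qk k = ∅ := card_eq_zero.mp (by omega)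
    have huTl : u = Tl k n := by
      apply Subset.antisymm _ hu'.1
      intro x hx
      rcases Mm_split hk hn x (hu'.2 hx) with h | h
      · exfalso
        have : x ∈ u ∩ Qk k := mem_inter.mpr ⟨hx, h⟩
        rw [huQ] at this; exact notMem_empty x this
      · exact h
    -- shape of w
    rcases hw with hw' | hw'
    · -- w ⊆ Qk with rank k-1, so w = Qk
      have h2w : 2 * k ∉ w := fun hm => twok_not_Qk hk hn (hw' hm)
      rw [rhoY, if_neg h2w, inter_eq_left.mpr hw'] at hwk
      have hwQ : w = Qk k := eq_of_subset_of_card_le hw' (by rw [card_Qk hk hn]; omega)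
      rcases hz with hz' | hz'
      · exact absurd (hwQ ▸ hz') hzw
      · rw [huTl]; exact hz'.1
    · exact absurd (huTl ▸ hw'.1) huw

end facts

section edges
variable (k n : ℕ)

def Bc (S : Finset ℕ) : Prop := S ⊆ Kk k ∧ S ≠ ∅
def Tc (S : Finset ℕ) : Prop := ∃ v, v ⊆ Kk k ∧ v ≠ Kk k ∧ S = v ∪ Mm k n
def Lc (S : Finset ℕ) : Prop := Yv k n S ∧ S ≠ ∅
def Rc (S : Finset ℕ) : Prop := ∃ y, Yv k n y ∧ y ≠ Mm k n ∧ S = y ∪ Kk k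

end edges

section edgefacts
variable {k n : ℕ} (hk : 3 ≤ k) (hn : 2 * k ≤ n)
include hk hn

lemma Yv_disjK {y : Finset ℕ} (hy : Yv k n y) : ∀ x, x ∈ y → x ∉ Kk k :=
  fun x hx hxK => disj_KM hk hn x hxK (Yv_sub_Mm hk hn hy hx)

lemma twok_mem_Mm : 2 * k ∈ Mm k n := by simp [Mm, mem_Icc]; omega

lemma empty_ne_Mm : (∅ : Finset ℕ) ≠ Mm k n := by
  intro h
  obtain ⟨x, hx⟩ := Mm_ne hk hn
  rw [← h] at hx
  exact notMem_empty x hx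

lemma empty_ne_Kk : (∅ : Finset ℕ) ≠ Kk k := by
  intro h
  obtain ⟨x, hx⟩ := Kk_ne hk hn
  rw [← h] at hx
  exact notMem_empty x hx

lemma f1 {S S' : Finset ℕ} (h : Bc k S) (h' : Rc k n S') : S ⊆ S' := by
  obtain ⟨y, hy, hyne, rfl⟩ := h'
  exact h.1.trans subset_union_right

lemma f2 {S S' : Finset ℕ} (h : Lc k n S) (h' : Tc k n S') : S ⊆ S' := by
  obtain ⟨v, hv, hvne, rfl⟩ := h'
  exact (Yv_sub_Mm hk hn h.1).trans subset_union_right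

lemma f3 {S S' : Finset ℕ} (h : Bc k S) (h' : Lc k n S') (hc : S ⊆ S' ∨ S' ⊆ S) : False := by
  rcases hc with hc | hc
  · obtain ⟨x, hx⟩ := nonempty_iff_ne_empty.mpr h.2
    exact disj_KM hk hn x (h.1 hx) (Yv_sub_Mm hk hn h'.1 (hc hx))
  · obtain ⟨x, hx⟩ := nonempty_iff_ne_empty.mpr h'.2
    exact disj_KM hk hn x (h.1 (hc hx)) (Yv_sub_Mm hk hn h'.1 hx)

lemma f4 {S S' : Finset ℕ} (h : Rc k n S) (h' : Tc k n S') (hc : S ⊆ S' ∨ S' ⊆ S) :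
    False := by
  obtain ⟨y, hy, hyne, rfl⟩ := h
  obtain ⟨v, hv, hvne, rfl⟩ := h'
  rcases hc with hc | hc
  · obtain ⟨c, hcK, hcv⟩ := exists_of_ssubset (ssubset_of_subset_of_ne hv hvne)
    have : c ∈ v ∪ Mm k n := hc (mem_union.mpr (Or.inr hcK))
    rcases mem_union.mp this with h | h
    · exact hcv h
    · exact disj_KM hk hn c hcK h
  · have hyM : y ⊂ Mm k n := ssubset_of_subset_of_ne (Yv_sub_Mm hk hn hy) hyne
    obtain ⟨c, hcM, hcy⟩ := exists_of_ssubset hyM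
    have : c ∈ y ∪ Kk k := hc (mem_union.mpr (Or.inr hcM))
    rcases mem_union.mp this with h | h
    · exact hcy h
    · exact disj_KM hk hn c h hcM

lemma XP {u w z : Finset ℕ} (hu : u ⊆ Kk k) (hw : w ⊆ Kk k) (hz : z ⊆ Kk k)
    (hu1 : u.card = 1) (hwk : w.card = k - 1) (huw : ¬ u ⊆ w) (hzw : ¬ z ⊆ w) :
    u ⊆ z := by
  obtain ⟨a, rfl⟩ := card_eq_one.mp hu1
  have haK : a ∈ Kk k := hu (mem_singleton_self a)
  have haw : a ∉ w := fun h => huw (singleton_subset_iff.mpr h)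
  have hcard : (Kk k \ w).card = 1 := by
    rw [card_sdiff_of_subset hw, card_Kk hk hn, hwk]; omega
  obtain ⟨b, hb⟩ := card_eq_one.mp hcard
  have hab : a = b := by
    have : a ∈ Kk k \ w := mem_sdiff.mpr ⟨haK, haw⟩
    rw [hb] at this; exact mem_singleton.mp this
  obtain ⟨c, hcz, hcw⟩ := not_subset.mp hzw
  have : c ∈ Kk k \ w := mem_sdiff.mpr ⟨hz hcz, hcw⟩
  rw [hb] at this
  have : c = b := mem_singleton.mp this
  rw [hab]
  exact singleton_subset_iff.mpr (this ▸ hcz)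

-- chain-extremity lemmas
lemma allB_Rc {f : Fin k → Finset ℕ} (hc : ∀ i j : Fin k, i < j → f i ⊂ f j)
    (hall : ∀ i, Bc k (f i)) : ∃ i, Rc k n (f i) := by
  have hk0 : (0 : ℕ) < k := by omega
  have hkk1 : k - 1 < k := by omega
  set i0 : Fin k := ⟨0, hk0⟩
  set ik : Fin k := ⟨k - 1, hkk1⟩
  have hgap : (f i0).card + (k - 1) ≤ (f ik).card :=
    fin_gap' (fun i => (f i).card) (fun i j hij => card_lt_card (hc i j hij))
      (k - 1) i0 ik (by simp [i0, ik])
  have h1 : 1 ≤ (f i0).card := card_pos.mpr (nonempty_iff_ne_empty.mpr (hall i0).2)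
  have h2 : (f ik).card ≤ k := by
    have := card_le_card (hall ik).1
    rwa [card_Kk hk hn] at this
  have hfk : f ik = Kk k :=
    eq_of_subset_of_card_le (hall ik).1 (by rw [card_Kk hk hn]; omega)
  exact ⟨ik, ∅, Yv_empty hk hn, empty_ne_Mm hk hn, by rw [hfk, empty_union]⟩

lemma allR_Bc {f : Fin k → Finset ℕ} (hc : ∀ i j : Fin k, i < j → f i ⊂ f j)
    (hall : ∀ i, Rc k n (f i)) : ∃ i, Bc k (f i) := by
  have hk0 : (0 : ℕ) < k := by omega
  have hkk1 : k - 1 < k := by omega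
  set i0 : Fin k := ⟨0, hk0⟩
  set ik : Fin k := ⟨k - 1, hkk1⟩
  have hstruct : ∀ i, Yv k n (f i \ Kk k) ∧ f i \ Kk k ≠ Mm k n ∧ f i = (f i \ Kk k) ∪ Kk k := by
    intro i
    obtain ⟨y, hy, hyne, heq⟩ := hall i
    have hyd : f i \ Kk k = y := by
      rw [heq]
      apply union_sdiff_cancel_right
      exact disjoint_left.mpr (by intro x hx hxK; exact Yv_disjK hk hn hy x hx hxK)
    rw [hyd]
    exact ⟨hy, hyne, heq⟩
  have hgap : rhoY k (f i0 \ Kk k) + (k - 1) ≤ rhoY k (f ik \ Kk k) := by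
    apply fin_gap' (fun i => rhoY k (f i \ Kk k)) _ (k - 1) i0 ik (by simp [i0, ik])
    intro i j hij
    apply Ymono hk hn (hstruct i).1 (hstruct j).1
    constructor
    · exact sdiff_subset_sdiff (hc i j hij).subset (Subset.refl _)
    · intro hsub
      apply (hc i j hij).2
      intro x hx
      rcases mem_union.mp ((hstruct j).2.2 ▸ hx : x ∈ (f j \ Kk k) ∪ Kk k) with h | h
      · have : x ∈ f i \ Kk k := hsub h
        exact (mem_sdiff.mp this).1
      · have : x ∈ (f i \ Kk k) ∪ Kk k := mem_union.mpr (Or.inr h)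
        rw [← (hstruct i).2.2] at this
        exact this
  have h2 : rhoY k (f ik \ Kk k) ≤ k - 1 := by
    have hle' := Yle hk hn (hstruct ik).1
    have hne' : rhoY k (f ik \ Kk k) ≠ k :=
      fun h => (hstruct ik).2.1 (Yk hk hn (hstruct ik).1 h)
    omega
  have h0' : rhoY k (f i0 \ Kk k) = 0 := by omega
  have : f i0 \ Kk k = ∅ := Y0 hk hn (hstruct i0).1 h0'
  have hfi0 : f i0 = Kk k := by
    have := (hstruct i0).2.2
    rwa [‹f i0 \ Kk k = ∅›, empty_union] at this
  exact ⟨i0, by rw [hfi0]; exact ⟨Subset.refl _, (empty_ne_Kk hk hn).symm⟩⟩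

lemma allL_Tc {f : Fin k → Finset ℕ} (hc : ∀ i j : Fin k, i < j → f i ⊂ f j)
    (hall : ∀ i, Lc k n (f i)) : ∃ i, Tc k n (f i) := by
  have hk0 : (0 : ℕ) < k := by omega
  have hkk1 : k - 1 < k := by omega
  set i0 : Fin k := ⟨0, hk0⟩
  set ik : Fin k := ⟨k - 1, hkk1⟩
  have hgap : rhoY k (f i0) + (k - 1) ≤ rhoY k (f ik) :=
    fin_gap' (fun i => rhoY k (f i))
      (fun i j hij => Ymono hk hn (hall i).1 (hall j).1 (hc i j hij))
      (k - 1) i0 ik (by simp [i0, ik])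
  have h1 : 1 ≤ rhoY k (f i0) := by
    rcases Nat.eq_zero_or_pos (rhoY k (f i0)) with h | h
    · exact absurd (Y0 hk hn (hall i0).1 h) (hall i0).2
    · exact h
  have h2 : rhoY k (f ik) ≤ k := Yle hk hn (hall ik).1
  have hfk : f ik = Mm k n := Yk hk hn (hall ik).1 (by omega)
  exact ⟨ik, ∅, empty_subset _, empty_ne_Kk hk hn, by rw [hfk, empty_union]⟩

lemma allT_Lc {f : Fin k → Finset ℕ} (hc : ∀ i j : Fin k, i < j → f i ⊂ f j)
    (hall : ∀ i, Tc k n (f i)) : ∃ i, Lc k n (f i) := by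
  have hk0 : (0 : ℕ) < k := by omega
  have hkk1 : k - 1 < k := by omega
  set i0 : Fin k := ⟨0, hk0⟩
  set ik : Fin k := ⟨k - 1, hkk1⟩
  have hstruct : ∀ i, (f i \ Mm k n) ⊆ Kk k ∧ f i \ Mm k n ≠ Kk k ∧
      f i = (f i \ Mm k n) ∪ Mm k n := by
    intro i
    obtain ⟨v, hv, hvne, heq⟩ := hall i
    have hvd : f i \ Mm k n = v := by
      rw [heq]
      apply union_sdiff_cancel_right
      exact disjoint_left.mpr (by intro x hx hxM; exact disj_KM hk hn x (hv hx) hxM)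
    rw [hvd]
    exact ⟨hv, hvne, heq⟩
  have hgap : (f i0 \ Mm k n).card + (k - 1) ≤ (f ik \ Mm k n).card := by
    apply fin_gap' (fun i => (f i \ Mm k n).card) _ (k - 1) i0 ik (by simp [i0, ik])
    intro i j hij
    apply card_lt_card
    constructor
    · exact sdiff_subset_sdiff (hc i j hij).subset (Subset.refl _)
    · intro hsub
      apply (hc i j hij).2
      intro x hx
      rcases mem_union.mp ((hstruct j).2.2 ▸ hx : x ∈ (f j \ Mm k n) ∪ Mm k n) with h | h
      · exact (mem_sdiff.mp (hsub h)).1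
      · have : x ∈ (f i \ Mm k n) ∪ Mm k n := mem_union.mpr (Or.inr h)
        rw [← (hstruct i).2.2] at this
        exact this
  have h2 : (f ik \ Mm k n).card ≤ k - 1 := by
    have hle' : (f ik \ Mm k n).card ≤ k := by
      have := card_le_card (hstruct ik).1
      rwa [card_Kk hk hn] at this
    have hne' : (f ik \ Mm k n).card ≠ k := by
      intro h
      exact (hstruct ik).2.1
        (eq_of_subset_of_card_le (hstruct ik).1 (by rw [card_Kk hk hn, h]))
    omega
  have h0' : (f i0 \ Mm k n).card = 0 := by omega
  have : f i0 \ Mm k n = ∅ := card_eq_zero.mp h0'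
  have hfi0 : f i0 = Mm k n := by
    have := (hstruct i0).2.2
    rwa [‹f i0 \ Mm k n = ∅›, empty_union] at this
  exact ⟨i0, by rw [hfi0]; exact ⟨Yv_Mm hk hn, (empty_ne_Mm hk hn).symm⟩⟩

end edgefacts

section classif
variable {k n : ℕ} (hk : 3 ≤ k) (hn : 2 * k ≤ n)

lemma chain_comp {m : ℕ} {f : Fin m → Finset ℕ} (hc : ∀ i j : Fin m, i < j → f i ⊂ f j)
    (i j : Fin m) : f i ⊆ f j ∨ f j ⊆ f i := by
  rcases lt_trichotomy i j with h | h | h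
  · exact Or.inl (hc i j h).subset
  · exact Or.inl (h ▸ Subset.refl _)
  · exact Or.inr (hc j i h).subset

include hk hn

lemma subN {S : Finset ℕ} (hS : S ∈ famCk k n) : S ⊆ Finset.Icc 1 n := by
  simp only [famCk, famA1, famA2, famA12, mem_union, mem_insert, mem_singleton,
    mem_image, mem_erase, mem_powerset] at hS
  rcases hS with ((h | h) | ((⟨-, h⟩ | ⟨-, h⟩) | ⟨a, ⟨hane, ha⟩, h⟩)) | ⟨a, -, h⟩
  · subst h; exact empty_subset _
  · subst h; exact Subset.refl _
  · exact h.trans (Icc_subset_Icc (le_refl 1) (by omega))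
  · exact h.trans (Icc_subset_Icc (by omega) (by omega))
  · subst h
    exact union_subset (Icc_subset_Icc (le_refl 1) (by omega))
      (ha.trans (Icc_subset_Icc (by omega) (by omega)))
  · subst h; exact sdiff_subset

lemma classify {S : Finset ℕ} (hS : S ∈ famCk k n) (h1 : S ≠ ∅) (h2 : S ≠ Finset.Icc 1 n) :
    Bc k S ∨ Tc k n S ∨ Lc k n S ∨ Rc k n S := by
  have hKsub : Kk k ⊆ Finset.Icc 1 n := Icc_subset_Icc (le_refl 1) (by omega)
  simp only [famCk, famA1, famA2, famA12, mem_union, mem_insert, mem_singleton,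
    mem_image, mem_erase, mem_powerset] at hS
  rcases hS with ((h | h) | ((⟨hne, h⟩ | ⟨hne, h⟩) | ⟨q, ⟨hqne, hq⟩, h⟩)) | ⟨a, ha, h⟩
  · exact absurd h h1
  · exact absurd h h2
  · -- A1
    exact Or.inl ⟨h, h1⟩
  · -- A2
    exact Or.inr (Or.inr (Or.inl ⟨Or.inl h, h1⟩))
  · -- A12 : S = Kk ∪ q
    refine Or.inr (Or.inr (Or.inr ⟨q, Or.inl hq, ?_, by rw [← h, union_comm]; rfl⟩))
    intro hqM
    exact twok_not_Qk hk hn (hq (hqM ▸ twok_mem_Mm hk hn))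
  · -- complements
    rcases ha with (⟨hane, ha⟩ | ⟨hane, ha⟩) | ⟨q, ⟨hqne, hq⟩, ha⟩
    · -- compl A1 : S = Icc 1 n \ T, T ⊆ Kk, T ≠ ∅ : T-edge
      subst h
      refine Or.inr (Or.inl ⟨Kk k \ a, sdiff_subset, ?_, ?_⟩)
      · intro heq
        obtain ⟨t, ht⟩ := nonempty_iff_ne_empty.mpr hane
        have htK : t ∈ Kk k := ha ht
        rw [← heq] at htK
        exact (mem_sdiff.mp htK).2 ht
      · ext x
        simp only [mem_sdiff, mem_union, Mm, Kk, mem_Icc] at *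
        constructor
        · rintro ⟨⟨hx1, hx2⟩, hxa⟩
          by_cases hxk : x ≤ k
          · exact Or.inl ⟨⟨hx1, hxk⟩, hxa⟩
          · exact Or.inr ⟨by omega, hx2⟩
        · rintro (⟨⟨hx1, hx2⟩, hxa⟩ | ⟨hx1, hx2⟩)
          · exact ⟨⟨hx1, by omega⟩, hxa⟩
          · refine ⟨⟨by omega, hx2⟩, fun hxa => ?_⟩
            have := ha hxa
            simp only [Kk, mem_Icc] at this
            omega
    · -- compl A2 : S = Icc 1 n \ q, q ⊆ Qk : R-edge
      subst h
      refine Or.inr (Or.inr (Or.inr ⟨Mm k n \ a, Or.inr ⟨?_, sdiff_subset⟩, ?_, ?_⟩))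
      · intro x hx
        simp only [Tl, mem_Icc] at hx
        refine mem_sdiff.mpr ⟨by simp only [Mm, mem_Icc]; omega, fun hxa => ?_⟩
        have := ha hxa
        simp only [Qk, mem_Icc] at this
        omega
      · intro heq
        obtain ⟨c, hc⟩ := nonempty_iff_ne_empty.mpr hane
        have hcM : c ∈ Mm k n := Qk_sub_Mm hk hn (ha hc)
        rw [← heq] at hcM
        exact (mem_sdiff.mp hcM).2 hc
      · ext x
        simp only [mem_sdiff, mem_union, Mm, Kk, mem_Icc] at *
        constructor
        · rintro ⟨⟨hx1, hx2⟩, hxa⟩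
          by_cases hxk : x ≤ k
          · exact Or.inr ⟨hx1, hxk⟩
          · exact Or.inl ⟨⟨by omega, hx2⟩, hxa⟩
        · rintro (⟨⟨hx1, hx2⟩, hxa⟩ | ⟨hx1, hx2⟩)
          · exact ⟨⟨by omega, hx2⟩, hxa⟩
          · refine ⟨⟨hx1, by omega⟩, fun hxa => ?_⟩
            have := ha hxa
            simp only [Qk, mem_Icc] at this
            omega
    · -- compl A12 : S = Icc 1 n \ (Kk ∪ q) = Mm \ q : L-edge
      subst h
      have hSeq : Finset.Icc 1 n \ a = Mm k n \ q := by
        rw [← ha]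
        ext x
        simp only [mem_sdiff, mem_union, Mm, Kk, mem_Icc]
        constructor
        · rintro ⟨⟨hx1, hx2⟩, hxa⟩
          push_neg at hxa
          exact ⟨⟨by omega, hx2⟩, hxa.2⟩
        · rintro ⟨⟨hx1, hx2⟩, hxq⟩
          exact ⟨⟨by omega, hx2⟩, by push_neg; exact ⟨by omega, hxq⟩⟩
      rw [hSeq]
      refine Or.inr (Or.inr (Or.inl ⟨Or.inr ⟨?_, sdiff_subset⟩, ?_⟩))
      · intro x hx
        simp only [Tl, mem_Icc] at hx
        refine mem_sdiff.mpr ⟨by simp only [Mm, mem_Icc]; omega, fun hxq => ?_⟩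
        have := hq hxq
        simp only [Qk, mem_Icc] at this
        omega
      · intro hempty
        have h2k : 2 * k ∈ Mm k n \ q := by
          refine mem_sdiff.mpr ⟨twok_mem_Mm hk hn, fun hxq => ?_⟩
          exact twok_not_Qk hk hn (hq hxq)
        rw [hempty] at h2k
        exact notMem_empty _ h2k

lemma pure1 (P Q : Fin k → Finset ℕ) (E : Finset ℕ)
    (hPc : ∀ i j : Fin k, i < j → P i ⊂ P j) (hQc : ∀ i j : Fin k, i < j → Q i ⊂ Q j)
    (hQcl : ∀ i, Bc k (Q i) ∨ Tc k n (Q i) ∨ Lc k n (Q i) ∨ Rc k n (Q i))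
    (hEcl : Bc k E ∨ Tc k n E ∨ Lc k n E ∨ Rc k n E)
    (hPQ : ∀ i j : Fin k, ¬ P i ⊆ Q j ∧ ¬ Q j ⊆ P i)
    (hPE : ∀ i, ¬ P i ⊆ E ∧ ¬ E ⊆ P i) (hQE : ∀ i, ¬ Q i ⊆ E ∧ ¬ E ⊆ Q i)
    (hP1 : ∀ i, Bc k (P i) ∨ Rc k n (P i)) : False := by
  have hexB : ∃ i, Bc k (P i) := by
    by_contra h
    push_neg at h
    obtain ⟨i, hi⟩ := allR_Bc hk hn hPc (fun i => (hP1 i).resolve_left (h i))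
    exact h i hi
  have hexR : ∃ i, Rc k n (P i) := by
    by_contra h
    push_neg at h
    obtain ⟨i, hi⟩ := allB_Rc hk hn hPc (fun i => (hP1 i).resolve_right (h i))
    exact h i hi
  obtain ⟨iB, hiB⟩ := hexB
  obtain ⟨iR, hiR⟩ := hexR
  have hQ2 : ∀ j, Lc k n (Q j) ∨ Tc k n (Q j) := by
    intro j
    rcases hQcl j with h | h | h | h
    · exact absurd (f1 hk hn h hiR) (hPQ iR j).2
    · exact Or.inr h
    · exact Or.inl h
    · exact absurd (f1 hk hn hiB h) (hPQ iB j).1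
  have hexL : ∃ j, Lc k n (Q j) := by
    by_contra h
    push_neg at h
    obtain ⟨j, hj⟩ := allT_Lc hk hn hQc (fun j => (hQ2 j).resolve_left (h j))
    exact h j hj
  have hexT : ∃ j, Tc k n (Q j) := by
    by_contra h
    push_neg at h
    obtain ⟨j, hj⟩ := allL_Tc hk hn hQc (fun j => (hQ2 j).resolve_right (h j))
    exact h j hj
  obtain ⟨jL, hjL⟩ := hexL
  obtain ⟨jT, hjT⟩ := hexT
  rcases hEcl with h | h | h | h
  · exact (hPE iR).2 (f1 hk hn h hiR)
  · exact (hQE jL).1 (f2 hk hn hjL h)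
  · exact (hQE jT).2 (f2 hk hn h hjT)
  · exact (hPE iB).1 (f1 hk hn hiB h)

lemma pure2 (P Q : Fin k → Finset ℕ) (E : Finset ℕ)
    (hPc : ∀ i j : Fin k, i < j → P i ⊂ P j) (hQc : ∀ i j : Fin k, i < j → Q i ⊂ Q j)
    (hQcl : ∀ i, Bc k (Q i) ∨ Tc k n (Q i) ∨ Lc k n (Q i) ∨ Rc k n (Q i))
    (hEcl : Bc k E ∨ Tc k n E ∨ Lc k n E ∨ Rc k n E)
    (hPQ : ∀ i j : Fin k, ¬ P i ⊆ Q j ∧ ¬ Q j ⊆ P i)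
    (hPE : ∀ i, ¬ P i ⊆ E ∧ ¬ E ⊆ P i) (hQE : ∀ i, ¬ Q i ⊆ E ∧ ¬ E ⊆ Q i)
    (hP2 : ∀ i, Lc k n (P i) ∨ Tc k n (P i)) : False := by
  have hexL : ∃ i, Lc k n (P i) := by
    by_contra h
    push_neg at h
    obtain ⟨i, hi⟩ := allT_Lc hk hn hPc (fun i => (hP2 i).resolve_left (h i))
    exact h i hi
  have hexT : ∃ i, Tc k n (P i) := by
    by_contra h
    push_neg at h
    obtain ⟨i, hi⟩ := allL_Tc hk hn hPc (fun i => (hP2 i).resolve_right (h i))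
    exact h i hi
  obtain ⟨jL, hjL⟩ := hexL
  obtain ⟨jT, hjT⟩ := hexT
  have hQ1 : ∀ j, Bc k (Q j) ∨ Rc k n (Q j) := by
    intro j
    rcases hQcl j with h | h | h | h
    · exact Or.inl h
    · exact absurd (f2 hk hn hjL h) (hPQ jL j).1
    · exact absurd (f2 hk hn h hjT) (hPQ jT j).2
    · exact Or.inr h
  have hexB : ∃ j, Bc k (Q j) := by
    by_contra h
    push_neg at h
    obtain ⟨j, hj⟩ := allR_Bc hk hn hQc (fun j => (hQ1 j).resolve_left (h j))
    exact h j hj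
  have hexR : ∃ j, Rc k n (Q j) := by
    by_contra h
    push_neg at h
    obtain ⟨j, hj⟩ := allB_Rc hk hn hQc (fun j => (hQ1 j).resolve_right (h j))
    exact h j hj
  obtain ⟨iB, hiB⟩ := hexB
  obtain ⟨iR, hiR⟩ := hexR
  rcases hEcl with h | h | h | h
  · exact (hQE iR).2 (f1 hk hn h hiR)
  · exact (hPE jL).1 (f2 hk hn hjL h)
  · exact (hPE jT).2 (f2 hk hn h hjT)
  · exact (hQE iB).1 (f1 hk hn hiB h)

end classif

end CkAux

/-- The family contains no induced copy of `2C_k + C_1`. -/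
theorem famCk_free (k n : ℕ) (hk : 3 ≤ k) (hn : 2 * k ≤ n) :
    ¬ ∃ (A B : Fin k → Finset ℕ) (E : Finset ℕ),
      (∀ i, A i ∈ famCk k n) ∧ (∀ i, B i ∈ famCk k n) ∧ E ∈ famCk k n ∧
      (∀ i j : Fin k, i < j → A i ⊂ A j) ∧
      (∀ i j : Fin k, i < j → B i ⊂ B j) ∧
      (∀ i j : Fin k, ¬ A i ⊆ B j ∧ ¬ B j ⊆ A i) ∧
      (∀ i, ¬ A i ⊆ E ∧ ¬ E ⊆ A i) ∧
      (∀ i, ¬ B i ⊆ E ∧ ¬ E ⊆ B i) := by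
  rintro ⟨A, B, E, hAm, hBm, hEm, hAc, hBc, hABi, hAE, hBE⟩
  classical
  have hk0 : (0 : ℕ) < k := by omega
  set i0 : Fin k := ⟨0, hk0⟩ with hi0def
  have hAne : ∀ i, A i ≠ ∅ := fun i h => (hAE i).1 (by rw [h]; exact Finset.empty_subset _)
  have hAnN : ∀ i, A i ≠ Finset.Icc 1 n :=
    fun i h => (hAE i).2 (by rw [h]; exact CkAux.subN hk hn hEm)
  have hBne : ∀ i, B i ≠ ∅ := fun i h => (hBE i).1 (by rw [h]; exact Finset.empty_subset _)
  have hBnN : ∀ i, B i ≠ Finset.Icc 1 n :=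
    fun i h => (hBE i).2 (by rw [h]; exact CkAux.subN hk hn hEm)
  have hEne : E ≠ ∅ := fun h => (hAE i0).2 (by rw [h]; exact Finset.empty_subset _)
  have hEnN : E ≠ Finset.Icc 1 n :=
    fun h => (hAE i0).1 (by rw [h]; exact CkAux.subN hk hn (hAm i0))
  have hAcl : ∀ i, CkAux.Bc k (A i) ∨ CkAux.Tc k n (A i) ∨ CkAux.Lc k n (A i) ∨
      CkAux.Rc k n (A i) := fun i => CkAux.classify hk hn (hAm i) (hAne i) (hAnN i)
  have hBcl : ∀ i, CkAux.Bc k (B i) ∨ CkAux.Tc k n (B i) ∨ CkAux.Lc k n (B i) ∨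
      CkAux.Rc k n (B i) := fun i => CkAux.classify hk hn (hBm i) (hBne i) (hBnN i)
  have hEcl : CkAux.Bc k E ∨ CkAux.Tc k n E ∨ CkAux.Lc k n E ∨ CkAux.Rc k n E :=
    CkAux.classify hk hn hEm hEne hEnN
  have hcompA : ∀ i j : Fin k, A i ⊆ A j ∨ A j ⊆ A i := CkAux.chain_comp hAc
  by_cases hA1 : ∀ i, CkAux.Bc k (A i) ∨ CkAux.Rc k n (A i)
  · exact CkAux.pure1 hk hn A B E hAc hBc hBcl hEcl hABi hAE hBE hA1
  by_cases hA2 : ∀ i, CkAux.Lc k n (A i) ∨ CkAux.Tc k n (A i)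
  · exact CkAux.pure2 hk hn A B E hAc hBc hBcl hEcl hABi hAE hBE hA2
  by_cases hB1 : ∀ i, CkAux.Bc k (B i) ∨ CkAux.Rc k n (B i)
  · exact CkAux.pure1 hk hn B A E hBc hAc hAcl hEcl
      (fun i j => ⟨(hABi j i).2, (hABi j i).1⟩) hBE hAE hB1
  by_cases hB2 : ∀ i, CkAux.Lc k n (B i) ∨ CkAux.Tc k n (B i)
  · exact CkAux.pure2 hk hn B A E hBc hAc hAcl hEcl
      (fun i j => ⟨(hABi j i).2, (hABi j i).1⟩) hBE hAE hB2
  push_neg at hA1 hA2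
  obtain ⟨ia, hia⟩ := hA1
  obtain ⟨ja, hja⟩ := hA2
  have hyacl : CkAux.Lc k n (A ia) ∨ CkAux.Tc k n (A ia) := by
    rcases hAcl ia with h | h | h | h
    · exact absurd h hia.1
    · exact Or.inr h
    · exact Or.inl h
    · exact absurd h hia.2
  have hxacl : CkAux.Bc k (A ja) ∨ CkAux.Rc k n (A ja) := by
    rcases hAcl ja with h | h | h | h
    · exact Or.inl h
    · exact absurd h hja.2
    · exact absurd h hja.1
    · exact Or.inr h
  rcases hxacl with hxB | hxR
  · rcases hyacl with hyL | hyT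
    · exact CkAux.f3 hk hn hxB hyL (hcompA ja ia)
    · -- BT case : apply core with the X instance
      have hdisjX : ∀ v : Finset ℕ, v ⊆ CkAux.Kk k → v ∩ CkAux.Mm k n = ∅ := by
        intro v hv
        rw [Finset.eq_empty_iff_forall_notMem]
        intro x hx
        rw [Finset.mem_inter] at hx
        exact CkAux.disj_KM hk hn x (hv hx.1) hx.2
      have hWA : ∀ i, ((A i) ⊆ CkAux.Kk k ∧ A i ≠ ∅ ∧ A i ∩ CkAux.Mm k n = ∅) ∨
          ∃ v, v ⊆ CkAux.Kk k ∧ v ≠ CkAux.Kk k ∧ A i = v ∪ CkAux.Mm k n := by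
        intro i
        rcases hAcl i with h | h | h | h
        · exact Or.inl ⟨h.1, h.2, hdisjX _ h.1⟩
        · exact Or.inr h
        · exact (CkAux.f3 hk hn hxB h (hcompA ja i)).elim
        · exact (CkAux.f4 hk hn h hyT (hcompA i ia)).elim
      have hWB : ∀ i, ((B i) ⊆ CkAux.Kk k ∧ B i ≠ ∅ ∧ B i ∩ CkAux.Mm k n = ∅) ∨
          ∃ v, v ⊆ CkAux.Kk k ∧ v ≠ CkAux.Kk k ∧ B i = v ∪ CkAux.Mm k n := by
        intro i
        rcases hBcl i with h | h | h | h
        · exact Or.inl ⟨h.1, h.2, hdisjX _ h.1⟩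
        · exact Or.inr h
        · exact ((hABi ia i).2 (CkAux.f2 hk hn h hyT)).elim
        · exact ((hABi ja i).1 (CkAux.f1 hk hn hxB h)).elim
      have hWE : (E ⊆ CkAux.Kk k ∧ E ≠ ∅ ∧ E ∩ CkAux.Mm k n = ∅) ∨
          ∃ v, v ⊆ CkAux.Kk k ∧ v ≠ CkAux.Kk k ∧ E = v ∪ CkAux.Mm k n := by
        rcases hEcl with h | h | h | h
        · exact Or.inl ⟨h.1, h.2, hdisjX _ h.1⟩
        · exact Or.inr h
        · exact ((hAE ia).2 (CkAux.f2 hk hn h hyT)).elim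
        · exact ((hAE ja).1 (CkAux.f1 hk hn hxB h)).elim
      exact CkAux.core k hk (fun v => v ⊆ CkAux.Kk k) (CkAux.Mm k n) (CkAux.Kk k)
        Finset.card (CkAux.Mm_ne hk hn) hdisjX (fun v hv => hv)
        (fun v w _ _ h => Finset.card_lt_card h)
        (fun v hv => by
          have := Finset.card_le_card hv
          rwa [CkAux.card_Kk hk hn] at this)
        (fun v _ h => Finset.card_eq_zero.mp h)
        (fun v hv h => Finset.eq_of_subset_of_card_le hv (by rw [CkAux.card_Kk hk hn, h]))
        (fun u w z hu hw hz h1 h2 h3 h4 => CkAux.XP hk hn hu hw hz h1 h2 h3 h4)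
        A B E hWA hWB hWE hAc hBc hABi hAE hBE
  · rcases hyacl with hyL | hyT
    · -- LR case : apply core with the Y instance
      have hdisjY : ∀ y, CkAux.Yv k n y → y ∩ CkAux.Kk k = ∅ := by
        intro y hyv
        rw [Finset.eq_empty_iff_forall_notMem]
        intro x hx
        rw [Finset.mem_inter] at hx
        exact CkAux.Yv_disjK hk hn hyv x hx.1 hx.2
      have hWA : ∀ i, (CkAux.Yv k n (A i) ∧ A i ≠ ∅ ∧ A i ∩ CkAux.Kk k = ∅) ∨
          ∃ y, CkAux.Yv k n y ∧ y ≠ CkAux.Mm k n ∧ A i = y ∪ CkAux.Kk k := by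
        intro i
        rcases hAcl i with h | h | h | h
        · exact (CkAux.f3 hk hn h hyL (hcompA i ia)).elim
        · exact (CkAux.f4 hk hn hxR h (hcompA ja i)).elim
        · exact Or.inl ⟨h.1, h.2, hdisjY _ h.1⟩
        · exact Or.inr h
      have hWB : ∀ i, (CkAux.Yv k n (B i) ∧ B i ≠ ∅ ∧ B i ∩ CkAux.Kk k = ∅) ∨
          ∃ y, CkAux.Yv k n y ∧ y ≠ CkAux.Mm k n ∧ B i = y ∪ CkAux.Kk k := by
        intro i
        rcases hBcl i with h | h | h | h
        · exact ((hABi ja i).2 (CkAux.f1 hk hn h hxR)).elim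
        · exact ((hABi ia i).1 (CkAux.f2 hk hn hyL h)).elim
        · exact Or.inl ⟨h.1, h.2, hdisjY _ h.1⟩
        · exact Or.inr h
      have hWE : (CkAux.Yv k n E ∧ E ≠ ∅ ∧ E ∩ CkAux.Kk k = ∅) ∨
          ∃ y, CkAux.Yv k n y ∧ y ≠ CkAux.Mm k n ∧ E = y ∪ CkAux.Kk k := by
        rcases hEcl with h | h | h | h
        · exact ((hAE ja).2 (CkAux.f1 hk hn h hxR)).elim
        · exact ((hAE ia).1 (CkAux.f2 hk hn hyL h)).elim
        · exact Or.inl ⟨h.1, h.2, hdisjY _ h.1⟩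
        · exact Or.inr h
      exact CkAux.core k hk (CkAux.Yv k n) (CkAux.Kk k) (CkAux.Mm k n) (CkAux.rhoY k)
        (CkAux.Kk_ne hk hn) hdisjY (fun y hyv => CkAux.Yv_sub_Mm hk hn hyv)
        (fun v w hv hw h => CkAux.Ymono hk hn hv hw h)
        (fun v hv => CkAux.Yle hk hn hv)
        (fun v hv h => CkAux.Y0 hk hn hv h)
        (fun v hv h => CkAux.Yk hk hn hv h)
        (fun u w z hu hw hz h1 h2 h3 h4 => CkAux.YP hk hn hu hw hz h1 h2 h3 h4)
        A B E hWA hWB hWE hAc hBc hABi hAE hBE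
    · exact CkAux.f4 hk hn hxR hyT (hcompA ja ia)
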